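/- In the Markov-modulated setting with |S|>1, suppose P_π(A_1=0)=0. Then: (a) if P_i(B_1^i=0)=1 for some i∈S, the degeneracy condition (D) holds, i.e. there exist constants c_j∈R, j∈S, with P_π(A_1c_{M_1}+B_1=c_{M_0})=1; (b) if P_i(B_1^i=0)=1 for all i∈S, then P_π(B_1=0)=1 or P_i(A_1^i=1)=1 for all i∈S. -/

import Mathlib

open MeasureTheory ProbabilityTheory Filter
open scoped ENNReal NNReal Topology

noncomputable section

namespace Perpetuities

/-- The positive part of the logarithm, with the convention `log⁺ 0 = 0`. -/
def logplus (x : ℝ) : ℝ := max (Real.log x) 0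

/-- Weak convergence of a sequence of (probability) measures on `ℝ`. -/
def WeakLim (μ : ℕ → Measure ℝ) (ν : Measure ℝ) : Prop :=
  ∀ f : BoundedContinuousFunction ℝ ℝ,
    Tendsto (fun n => ∫ x, f x ∂ μ n) atTop (nhds (∫ x, f x ∂ ν))

/-- `|f n| → ∞` in `μ`-probability. -/
def TendstoInfInMeasure {Ω : Type*} [MeasurableSpace Ω] (μ : Measure Ω) (f : ℕ → Ω → ℝ) : Prop :=
  ∀ x : ℝ, 0 < x → Tendsto (fun n => μ {ω | |f n ω| ≤ x}) atTop (nhds 0)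

/-- `d` is the lattice span (period) of the distribution of the `ℕ`-valued random
variable `T` under `μ`, i.e. `d` is the greatest common divisor of the support. -/
def LatticeSpan {Ω : Type*} [MeasurableSpace Ω] (μ : Measure Ω) (T : Ω → ℕ) (d : ℕ) : Prop :=
  (∀ n, 0 < μ {ω | T ω = n} → d ∣ n) ∧ ∀ e : ℕ, (∀ n, 0 < μ {ω | T ω = n} → e ∣ n) → e ∣ d

/-- The Markov-modulated setting: an ergodic (irreducible, aperiodic, positive recurrent)
Markov chain `M` on a countable state space `S` with transition matrix `p` and stationary
distribution `π`, modulating a sequence `(A_n, B_n)_{n ≥ 1}` of real random pairs (indexed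
here so that `A n`, `B n` are the paper's `A_{n+1}`, `B_{n+1}`): conditionally on the whole
path of the chain, the pairs are independent and the conditional law of `(A_{n+1}, B_{n+1})`
given the path depends only on `(M_n, M_{n+1})`, via the stochastic kernel `K`.
`P i` is the underlying probability measure conditioned on `M 0 = i`. -/
structure MMSetting (S : Type*) (Ω : Type*) [MeasurableSpace S] [MeasurableSingletonClass S]
    [Countable S] [MeasurableSpace Ω] where
  P : S → Measure Ω
  prob : ∀ i, IsProbabilityMeasure (P i)
  π : S → ℝ≥0∞
  πsum : ∑' i, π i = 1
  πpos : ∀ i, 0 < π i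
  p : S → S → ℝ≥0∞
  psum : ∀ i, ∑' j, p i j = 1
  stationary : ∀ j, ∑' i, π i * p i j = π j
  K : S → S → Measure (ℝ × ℝ)
  Kprob : ∀ i j, IsProbabilityMeasure (K i j)
  M : ℕ → Ω → S
  A : ℕ → Ω → ℝ
  B : ℕ → Ω → ℝ
  measM : ∀ n, Measurable (M n)
  measA : ∀ n, Measurable (A n)
  measB : ∀ n, Measurable (B n)
  start : ∀ i, P i {ω | M 0 ω = i} = 1
  chain : ∀ (i : S) (n : ℕ) (path : ℕ → S), path 0 = i →
    P i (⋂ k ∈ Finset.range (n + 1), {ω | M k ω = path k})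
      = ∏ k ∈ Finset.range n, p (path k) (path (k + 1))
  modulated : ∀ (i : S) (n : ℕ) (path : ℕ → S) (E : ℕ → Set (ℝ × ℝ)), path 0 = i →
    (∀ k, MeasurableSet (E k)) →
    P i ((⋂ k ∈ Finset.range (n + 1), {ω | M k ω = path k}) ∩
        ⋂ k ∈ Finset.range n, {ω | (A k ω, B k ω) ∈ E k})
      = P i (⋂ k ∈ Finset.range (n + 1), {ω | M k ω = path k})
        * ∏ k ∈ Finset.range n, K (path k) (path (k + 1)) (E k)
  irreducible : ∀ i j, ∃ n, 0 < P i {ω | M n ω = j}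
  recurrent : ∀ i, P i {ω | ∃ n, 0 < n ∧ M n ω = i} = 1
  posRecurrent : ∀ i, ∫⁻ ω, ((sInf {n | 0 < n ∧ M n ω = i} : ℕ) : ℝ≥0∞) ∂ P i < ⊤
  aperiodic : ∀ (i : S) (d : ℕ), (∀ n, 0 < n → 0 < P i {ω | M n ω = i} → d ∣ n) → d = 1

namespace MMSetting

variable {S : Type*} [MeasurableSpace S] [MeasurableSingletonClass S] [Countable S]
variable {Ω : Type*} [MeasurableSpace Ω]
variable (X : MMSetting S Ω)

/-- `Pπ = ∑ i, π i • P i`, the stationary (unconditional) probability measure. -/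
def Pπ : Measure Ω := Measure.sum fun i => X.π i • X.P i

/-- `Pprod n = Π_n = A_1 ⋯ A_n`, with `Π_0 = 1`. -/
def Pprod (n : ℕ) (ω : Ω) : ℝ := ∏ k ∈ Finset.range n, X.A k ω

/-- `Ssum n = ∑_{k=1}^n Π_{k-1} B_k`, the value `Ψ_1 ∘ ⋯ ∘ Ψ_n (0)` of the backward
iteration started at `0`. -/
def Ssum (n : ℕ) (ω : Ω) : ℝ := ∑ k ∈ Finset.range n, X.Pprod k ω * X.B k ω

/-- `Zb Z n = Ψ_1 ∘ ⋯ ∘ Ψ_n (Z) = Π_n Z + ∑_{k=1}^n Π_{k-1} B_k`, the backward iteration. -/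
def Zb (Z : Ω → ℝ) (n : ℕ) (ω : Ω) : ℝ := X.Pprod n ω * Z ω + X.Ssum n ω

/-- `Zf Z n = Ψ_n ∘ ⋯ ∘ Ψ_1 (Z)`, the forward iteration. -/
def Zf (Z : Ω → ℝ) : ℕ → Ω → ℝ
  | 0 => Z
  | n + 1 => fun ω => X.A n ω * Zf Z n ω + X.B n ω

/-- The perpetuity `Z_∞ = ∑_{n ≥ 1} Π_{n-1} B_n`. -/
def Zinf (ω : Ω) : ℝ := ∑' n, X.Pprod n ω * X.B n ω

/-- `tau i n = τ_n(i)`, the `n`-th return time of the driving chain to the state `i`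
(`τ_0(i) = 0`). -/
def tau (i : S) : ℕ → Ω → ℕ
  | 0 => fun _ => 0
  | n + 1 => fun ω => sInf {k | tau i n ω < k ∧ X.M k ω = i}

/-- `A_1^i = Π_{τ(i)}`. -/
def Ai (i : S) (ω : Ω) : ℝ := X.Pprod (X.tau i 1 ω) ω

/-- `B_1^i = ∑_{k=1}^{τ(i)} Π_{k-1} B_k`. -/
def Bi (i : S) (ω : Ω) : ℝ := X.Ssum (X.tau i 1 ω) ω

/-- `W^i = max_{1 ≤ k ≤ τ(i)} |Π_{k-1} B_k|`. -/
def Wi (i : S) (ω : Ω) : ℝ :=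
  (((Finset.range (X.tau i 1 ω)).sup fun k => ‖X.Pprod k ω * X.B k ω‖₊ : ℝ≥0) : ℝ)

/-- `S_{τ(i)} = - log |Π_{τ(i)}|`. -/
def Stau (i : S) (ω : Ω) : ℝ := - Real.log |X.Ai i ω|

/-- The function `J_i`: `J_i(0) = 1`, and for `x > 0`, `J_i(x) = x / E_i (S_{τ(i)}⁺ ∧ x)`
if `P_i(S_{τ(i)} ≤ 0) < 1`, and `J_i(x) = x` otherwise. -/
def Ji (i : S) (x : ℝ) : ℝ :=
  if x = 0 then 1
  else if X.P i {ω | X.Stau i ω ≤ 0} < 1 then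
    x / ∫ ω, min (max (X.Stau i ω) 0) x ∂ X.P i
  else x

/-- `τ̂(i) = inf {k ≥ 1 : M_k = i, Π_k = 1}`. -/
def hatτ (i : S) (ω : Ω) : ℕ := sInf {k | 0 < k ∧ X.M k ω = i ∧ X.Pprod k ω = 1}

/-- `Z` is an admissible initial value: it is (conditionally on `M 0`, i.e. under each `P i`)
independent of the modulated sequence `(M_n, A_n, B_n)_{n ≥ 1}`. -/
def Admissible (Z : Ω → ℝ) : Prop :=
  Measurable Z ∧
    ∀ i : S, IndepFun Z (fun ω => fun n : ℕ => (X.M (n + 1) ω, X.A n ω, X.B n ω)) (X.P i)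

/-- The degeneracy condition: `A_1 c_{M_1} + B_1 = c_{M_0}` a.s. for the family `c`. -/
def DegenD (c : S → ℝ) : Prop :=
  ∀ᵐ ω ∂ X.Pπ, X.A 0 ω * c (X.M 1 ω) + X.B 0 ω = c (X.M 0 ω)

/-- The dual degeneracy condition: `A_1 c_{M_0} + B_1 = c_{M_1}` a.s. for the family `c`. -/
def DegenDdual (c : S → ℝ) : Prop :=
  ∀ᵐ ω ∂ X.Pπ, X.A 0 ω * c (X.M 0 ω) + X.B 0 ω = c (X.M 1 ω)

end MMSetting

end Perpetuities

namespace Perpetuities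

open MMSetting


/-! ### Auxiliary machinery -/

section AuxGeneric

variable {α β : Type*} [MeasurableSpace α] [MeasurableSpace β]
  {μ : Measure α} {ν : Measure β}

lemma ae_prod_mk [SFinite μ] [SFinite ν] {P : α → Prop} {Q : β → Prop}
    (hP : ∀ᵐ x ∂μ, P x) (hQ : ∀ᵐ y ∂ν, Q y) :
    ∀ᵐ z ∂μ.prod ν, P z.1 ∧ Q z.2 :=
  (Measure.quasiMeasurePreserving_fst.ae hP).and
    (Measure.quasiMeasurePreserving_snd.ae hQ)

lemma ae_fst_of_ae_prod [IsProbabilityMeasure ν] {P : α → Prop}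
    (h : ∀ᵐ z ∂μ.prod ν, P z.1) : ∀ᵐ x ∂μ, P x := by
  filter_upwards [Measure.ae_ae_of_ae_prod h] with x hx
  obtain ⟨_, h⟩ := hx.exists
  exact h

lemma ae_const_of_prod_eq [IsProbabilityMeasure μ] [IsProbabilityMeasure ν]
    {f : α → ℝ} {g : β → ℝ} (h : ∀ᵐ z ∂μ.prod ν, g z.2 = f z.1) :
    ∃ r : ℝ, (∀ᵐ x ∂μ, f x = r) ∧ (∀ᵐ y ∂ν, g y = r) := by
  have h' := Measure.ae_ae_of_ae_prod h
  obtain ⟨x0, hx0⟩ := h'.exists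
  refine ⟨f x0, ?_, hx0⟩
  filter_upwards [h'] with x hx
  obtain ⟨y, hy1, hy2⟩ := (hx.and hx0).exists
  rw [← hy1, hy2]

end AuxGeneric

section AuxSeq

/-- Product of the first components. -/
def pN (n : ℕ) (z : ℕ → ℝ × ℝ) : ℝ := ∏ k ∈ Finset.range n, (z k).1

/-- Weighted sum. -/
def sN (n : ℕ) (z : ℕ → ℝ × ℝ) : ℝ := ∑ k ∈ Finset.range n, pN k z * (z k).2

/-- Extension of a finite tuple by junk. -/
def exd {n : ℕ} (x : Fin n → ℝ × ℝ) : ℕ → ℝ × ℝ :=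
  fun k => if h : k < n then x ⟨k, h⟩ else (1, 0)

/-- `pN` on tuples. -/
def pF (n : ℕ) (x : Fin n → ℝ × ℝ) : ℝ := pN n (exd x)

/-- `sN` on tuples. -/
def sF (n : ℕ) (x : Fin n → ℝ × ℝ) : ℝ := sN n (exd x)

lemma exd_lt {n : ℕ} (x : Fin n → ℝ × ℝ) {k : ℕ} (h : k < n) : exd x k = x ⟨k, h⟩ :=
  dif_pos h

lemma pN_congr {n : ℕ} {z z' : ℕ → ℝ × ℝ} (h : ∀ k < n, z k = z' k) : pN n z = pN n z' :=
  Finset.prod_congr rfl fun k hk => by rw [h k (Finset.mem_range.mp hk)]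

lemma sN_congr {n : ℕ} {z z' : ℕ → ℝ × ℝ} (h : ∀ k < n, z k = z' k) : sN n z = sN n z' := by
  refine Finset.sum_congr rfl fun k hk => ?_
  have hk' := Finset.mem_range.mp hk
  rw [h k hk', pN_congr (fun l hl => h l (hl.trans hk'))]

lemma pN_add (m r : ℕ) (z : ℕ → ℝ × ℝ) :
    pN (m + r) z = pN m z * pN r (fun k => z (m + k)) :=
  Finset.prod_range_add _ m r

lemma sN_add (m r : ℕ) (z : ℕ → ℝ × ℝ) :
    sN (m + r) z = sN m z + pN m z * sN r (fun k => z (m + k)) := by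
  rw [sN, Finset.sum_range_add, ← sN]
  congr 1
  rw [sN, Finset.mul_sum]
  exact Finset.sum_congr rfl fun k _ => by rw [pN_add m k z]; ring

lemma measurable_pN (n : ℕ) : Measurable (pN n) :=
  Finset.measurable_prod _ fun k _ => (measurable_pi_apply k).fst

lemma measurable_sN (n : ℕ) : Measurable (sN n) :=
  Finset.measurable_sum _ fun k _ => (measurable_pN k).mul (measurable_pi_apply k).snd

lemma measurable_exd {n : ℕ} : Measurable (fun x : Fin n → ℝ × ℝ => exd x) := by
  refine measurable_pi_lambda _ fun k => ?_
  by_cases h : k < n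
  · simpa [exd, h] using measurable_pi_apply (⟨k, h⟩ : Fin n)
  · simpa [exd, h] using measurable_const

lemma measurable_pF (n : ℕ) : Measurable (pF n) := (measurable_pN n).comp measurable_exd

lemma measurable_sF (n : ℕ) : Measurable (sF n) := (measurable_sN n).comp measurable_exd

lemma sF_zero (x : Fin 0 → ℝ × ℝ) : sF 0 x = 0 := by simp [sF, sN]

lemma pF_zero (x : Fin 0 → ℝ × ℝ) : pF 0 x = 1 := by simp [pF, pN]

lemma sF_one (x : Fin 1 → ℝ × ℝ) : sF 1 x = (x 0).2 := by
  simp [sF, sN, pN, exd_lt x (by norm_num : (0:ℕ) < 1)]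

lemma pF_one (x : Fin 1 → ℝ × ℝ) : pF 1 x = (x 0).1 := by
  simp [pF, pN, exd_lt x (by norm_num : (0:ℕ) < 1)]

end AuxSeq


section AppT

open MeasureTheory

/-- Gluing two finite tuples, as a measurable equivalence. -/
def appT (m r : ℕ) : ((Fin m → ℝ × ℝ) × (Fin r → ℝ × ℝ)) ≃ᵐ (Fin (m + r) → ℝ × ℝ) :=
  (MeasurableEquiv.sumPiEquivProdPi (fun _ : Fin m ⊕ Fin r => ℝ × ℝ)).symm.trans
    (MeasurableEquiv.piCongrLeft (fun _ : Fin (m + r) => ℝ × ℝ) finSumFinEquiv)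

lemma appT_apply_castAdd {m r : ℕ} (q : (Fin m → ℝ × ℝ) × (Fin r → ℝ × ℝ)) (k : Fin m) :
    appT m r q (Fin.castAdd r k) = q.1 k := by
  have : (Fin.castAdd r k) = finSumFinEquiv (Sum.inl k) := rfl
  rw [this]
  show (Equiv.piCongrLeft (fun _ : Fin (m + r) => ℝ × ℝ) finSumFinEquiv)
      ((Equiv.sumPiEquivProdPi (fun _ : Fin m ⊕ Fin r => ℝ × ℝ)).symm q)
      (finSumFinEquiv (Sum.inl k)) = q.1 k
  rw [Equiv.piCongrLeft_apply_apply]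
  rfl

lemma appT_apply_natAdd {m r : ℕ} (q : (Fin m → ℝ × ℝ) × (Fin r → ℝ × ℝ)) (k : Fin r) :
    appT m r q (Fin.natAdd m k) = q.2 k := by
  have : (Fin.natAdd m k) = finSumFinEquiv (Sum.inr k) := rfl
  rw [this]
  show (Equiv.piCongrLeft (fun _ : Fin (m + r) => ℝ × ℝ) finSumFinEquiv)
      ((Equiv.sumPiEquivProdPi (fun _ : Fin m ⊕ Fin r => ℝ × ℝ)).symm q)
      (finSumFinEquiv (Sum.inr k)) = q.2 k
  rw [Equiv.piCongrLeft_apply_apply]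
  rfl

lemma exd_appT_left {m r : ℕ} (q : (Fin m → ℝ × ℝ) × (Fin r → ℝ × ℝ)) {l : ℕ} (hl : l < m) :
    exd (appT m r q) l = exd q.1 l := by
  rw [exd_lt _ (show l < m + r by omega), exd_lt _ hl]
  have : (⟨l, show l < m + r by omega⟩ : Fin (m + r)) = Fin.castAdd r ⟨l, hl⟩ := rfl
  rw [this, appT_apply_castAdd]

lemma exd_appT_right {m r : ℕ} (q : (Fin m → ℝ × ℝ) × (Fin r → ℝ × ℝ)) {l : ℕ} (hl : l < r) :
    exd (appT m r q) (m + l) = exd q.2 l := by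
  rw [exd_lt _ (show m + l < m + r by omega), exd_lt _ hl]
  have : (⟨m + l, show m + l < m + r by omega⟩ : Fin (m + r)) = Fin.natAdd m ⟨l, hl⟩ := rfl
  rw [this, appT_apply_natAdd]

lemma pF_appT {m r : ℕ} (q : (Fin m → ℝ × ℝ) × (Fin r → ℝ × ℝ)) :
    pF (m + r) (appT m r q) = pF m q.1 * pF r q.2 := by
  rw [pF, pN_add]
  congr 1
  · exact pN_congr fun l hl => exd_appT_left q hl
  · exact pN_congr fun l hl => exd_appT_right q hl

lemma sF_appT {m r : ℕ} (q : (Fin m → ℝ × ℝ) × (Fin r → ℝ × ℝ)) :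
    sF (m + r) (appT m r q) = sF m q.1 + pF m q.1 * sF r q.2 := by
  rw [sF, sN_add]
  congr 1
  · exact sN_congr fun l hl => exd_appT_left q hl
  · rw [pF]
    congr 1
    · exact pN_congr fun l hl => exd_appT_left q hl
    · exact sN_congr fun l hl => exd_appT_right q hl

lemma measurePreserving_appT (μ : ℕ → Measure (ℝ × ℝ)) [∀ k, IsProbabilityMeasure (μ k)]
    (m r : ℕ) :
    MeasurePreserving (appT m r)
      ((Measure.pi fun k : Fin m => μ k).prod (Measure.pi fun k : Fin r => μ (m + k)))
      (Measure.pi fun k : Fin (m + r) => μ k) := by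
  haveI : ∀ i : Fin m ⊕ Fin r, SigmaFinite
      ((fun s => Sum.elim (fun k : Fin m => μ (k : ℕ)) (fun k : Fin r => μ (m + (k : ℕ))) s) i) := by
    rintro (k | k) <;> · simp only [Sum.elim_inl, Sum.elim_inr]; infer_instance
  have h1 := MeasureTheory.measurePreserving_sumPiEquivProdPi_symm
    (X := fun _ : Fin m ⊕ Fin r => ℝ × ℝ)
    (fun s => Sum.elim (fun k : Fin m => μ (k : ℕ)) (fun k : Fin r => μ (m + (k : ℕ))) s)
  have h2 := MeasureTheory.measurePreserving_piCongrLeft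
    (μ := fun i : Fin (m + r) => μ (i : ℕ)) (α := fun _ : Fin (m + r) => ℝ × ℝ) finSumFinEquiv
  have hsrc : (Measure.pi fun i' : Fin m ⊕ Fin r => μ ((finSumFinEquiv i' : Fin (m + r)) : ℕ))
      = Measure.pi
        (fun s => Sum.elim (fun k : Fin m => μ (k : ℕ)) (fun k : Fin r => μ (m + (k : ℕ))) s) := by
    congr 1
    funext i'
    cases i' with
    | inl k => simp
    | inr k => simp
  rw [hsrc] at h2
  exact h2.comp h1

end AppT


namespace MMSetting

variable {S : Type*} [MeasurableSpace S] [MeasurableSingletonClass S] [Countable S]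
variable {Ω : Type*} [MeasurableSpace Ω] (X : MMSetting S Ω)

instance (i : S) : IsProbabilityMeasure (X.P i) := X.prob i

/-- Cylinder event determined by the path of the chain up to time `n`. -/
def cyl (γ : ℕ → S) (n : ℕ) : Set Ω := ⋂ k ∈ Finset.range (n + 1), {ω | X.M k ω = γ k}

/-- A path with positive transition probabilities. -/
def pos (γ : ℕ → S) (n : ℕ) : Prop := ∀ k < n, 0 < X.p (γ k) (γ (k + 1))

/-- Product of the modulation kernels along a path. -/
def kap (γ : ℕ → S) (n : ℕ) : Measure (Fin n → ℝ × ℝ) :=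
  Measure.pi fun k : Fin n => X.K (γ k) (γ ((k : ℕ) + 1))

/-- The first `n` pairs `(A, B)`. -/
def Phi (n : ℕ) (ω : Ω) : Fin n → ℝ × ℝ := fun k => (X.A k ω, X.B k ω)

instance (γ : ℕ → S) (n : ℕ) : IsProbabilityMeasure (X.kap γ n) := by
  haveI : ∀ k : Fin n, IsProbabilityMeasure (X.K (γ k) (γ ((k : ℕ) + 1))) :=
    fun k => X.Kprob _ _
  rw [kap]; infer_instance

lemma mem_cyl {γ : ℕ → S} {n : ℕ} {ω : Ω} : ω ∈ X.cyl γ n ↔ ∀ k ≤ n, X.M k ω = γ k := by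
  simp [cyl, Nat.lt_succ_iff]

lemma measurableSet_cyl (γ : ℕ → S) (n : ℕ) : MeasurableSet (X.cyl γ n) := by
  refine MeasurableSet.biInter (Finset.range (n + 1)).countable_toSet fun k _ => ?_
  exact X.measM k (measurableSet_singleton (γ k))

lemma measurable_Phi (n : ℕ) : Measurable (X.Phi n) :=
  measurable_pi_lambda _ fun k => (X.measA k).prodMk (X.measB k)

lemma P_cyl {γ : ℕ → S} {n : ℕ} {i : S} (hγ : γ 0 = i) :
    X.P i (X.cyl γ n) = ∏ k ∈ Finset.range n, X.p (γ k) (γ (k + 1)) :=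
  X.chain i n γ hγ

lemma cyl_pos {γ : ℕ → S} {n : ℕ} {i : S} (hγ : γ 0 = i) (hpos : X.pos γ n) :
    0 < X.P i (X.cyl γ n) := by
  rw [X.P_cyl hγ]
  exact pos_iff_ne_zero.mpr (Finset.prod_ne_zero_iff.mpr fun k hk =>
    (hpos k (Finset.mem_range.mp hk)).ne')

lemma cyl_congr {γ γ' : ℕ → S} {n : ℕ} (h : ∀ k ≤ n, γ k = γ' k) :
    X.cyl γ n = X.cyl γ' n := by
  ext ω; rw [X.mem_cyl, X.mem_cyl]
  exact ⟨fun hm k hk => (h k hk) ▸ hm k hk, fun hm k hk => (h k hk).symm ▸ hm k hk⟩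

lemma kap_congr {γ γ' : ℕ → S} {n : ℕ} (h : ∀ k ≤ n, γ k = γ' k) :
    X.kap γ n = X.kap γ' n := by
  rw [kap, kap]
  congr 1
  funext k
  rw [h k (le_of_lt k.2), h ((k : ℕ) + 1) (by omega)]

lemma pos_congr {γ γ' : ℕ → S} {n : ℕ} (h : ∀ k ≤ n, γ k = γ' k) (hp : X.pos γ n) :
    X.pos γ' n := fun k hk => by
  rw [← h k (le_of_lt hk), ← h (k + 1) (by omega)]; exact hp k hk

/-- The fundamental transfer identity: on a cylinder, the first `n` pairs `(A, B)` are
distributed according to the product of the kernels along the path. -/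
lemma cyl_inter {γ : ℕ → S} {n : ℕ} {i : S} (hγ : γ 0 = i) {E : Set (Fin n → ℝ × ℝ)}
    (hE : MeasurableSet E) :
    X.P i (X.cyl γ n ∩ X.Phi n ⁻¹' E) = X.P i (X.cyl γ n) * X.kap γ n E := by
  haveI : ∀ k : Fin n, IsProbabilityMeasure (X.K (γ k) (γ ((k : ℕ) + 1))) :=
    fun k => X.Kprob _ _
  have hbox : ∀ s : ∀ _ : Fin n, Set (ℝ × ℝ), (∀ k, MeasurableSet (s k)) →
      X.P i (X.cyl γ n ∩ X.Phi n ⁻¹' Set.pi Set.univ s)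
        = X.P i (X.cyl γ n) * ∏ k : Fin n, X.K (γ k) (γ ((k : ℕ) + 1)) (s k) := by
    intro s hs
    set E' : ℕ → Set (ℝ × ℝ) := fun k => if h : k < n then s ⟨k, h⟩ else Set.univ with hE'
    have hpre : X.Phi n ⁻¹' Set.pi Set.univ s
        = ⋂ k ∈ Finset.range n, {ω | (X.A k ω, X.B k ω) ∈ E' k} := by
      ext ω
      simp only [Set.mem_preimage, Set.mem_pi, Set.mem_univ, true_implies, Set.mem_iInter,
        Finset.mem_range, Set.mem_setOf_eq]
      constructor
      · intro h k hk
        simp only [hE', dif_pos hk]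
        exact h ⟨k, hk⟩
      · intro h k
        have := h k k.2
        simpa only [hE', dif_pos k.2, Fin.eta, Phi] using this
    have hmod := X.modulated i n γ E' hγ (fun k => by
      by_cases h : k < n
      · simp only [hE', dif_pos h]; exact hs ⟨k, h⟩
      · simp only [hE', dif_neg h]; exact MeasurableSet.univ)
    rw [hpre]
    have hprod : ∏ k ∈ Finset.range n, X.K (γ k) (γ (k + 1)) (E' k)
        = ∏ k : Fin n, X.K (γ k) (γ ((k : ℕ) + 1)) (s k) := by
      rw [← Fin.prod_univ_eq_prod_range (fun k => X.K (γ k) (γ (k + 1)) (E' k)) n]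
      refine Finset.prod_congr rfl fun k _ => ?_
      congr 1
      simp only [hE', dif_pos k.2, Fin.eta]
    rw [← hprod]
    exact hmod
  rcases eq_or_ne (X.P i (X.cyl γ n)) 0 with hc | hc
  · rw [hc, zero_mul]
    exact le_antisymm (le_trans (measure_mono Set.inter_subset_left) hc.le) zero_le
  · set t := X.P i (X.cyl γ n) with ht
    have htop : t ≠ ⊤ := measure_ne_top _ _
    set ν := Measure.map (X.Phi n) ((X.P i).restrict (X.cyl γ n)) with hν
    have hνap : ∀ E : Set (Fin n → ℝ × ℝ), MeasurableSet E →
        ν E = X.P i (X.cyl γ n ∩ X.Phi n ⁻¹' E) := by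
      intro E hE
      rw [hν, Measure.map_apply (X.measurable_Phi n) hE,
        Measure.restrict_apply (X.measurable_Phi n hE), Set.inter_comm]
    have hkap : X.kap γ n = t⁻¹ • ν := by
      rw [kap]
      refine Measure.pi_eq fun s hs => ?_
      rw [Measure.smul_apply, smul_eq_mul, hνap _ (MeasurableSet.univ_pi hs), hbox s hs,
        ← mul_assoc, ENNReal.inv_mul_cancel hc htop, one_mul]
    rw [← hνap E hE, hkap, Measure.smul_apply, smul_eq_mul, ← mul_assoc,
      ENNReal.mul_inv_cancel hc htop, one_mul]

/-- Evaluation of the path measure on a single-coordinate event. -/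
lemma kap_coord {γ : ℕ → S} {n : ℕ} (k : Fin n) {s : Set (ℝ × ℝ)} (hs : MeasurableSet s) :
    X.kap γ n {x | x k ∈ s} = X.K (γ k) (γ ((k : ℕ) + 1)) s := by
  haveI : ∀ j : Fin n, IsProbabilityMeasure (X.K (γ j) (γ ((j : ℕ) + 1))) :=
    fun j => X.Kprob _ _
  have hset : {x : Fin n → ℝ × ℝ | x k ∈ s}
      = Set.pi Set.univ (Function.update (fun _ : Fin n => Set.univ) k s) := by
    ext x
    simp only [Set.mem_setOf_eq, Set.mem_pi, Set.mem_univ, true_implies]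
    constructor
    · intro h j
      rcases eq_or_ne j k with rfl | hj
      · rwa [Function.update_self]
      · rw [Function.update_of_ne hj]; trivial
    · intro h
      have := h k
      rwa [Function.update_self] at this
  rw [hset, kap, Measure.pi_pi]
  rw [Fintype.prod_eq_single k (fun j hj => by
    rw [Function.update_of_ne hj]; exact measure_univ)]
  rw [Function.update_self]

end MMSetting


namespace MMSetting

variable {S : Type*} [MeasurableSpace S] [MeasurableSingletonClass S] [Countable S]
variable {Ω : Type*} [MeasurableSpace Ω] (X : MMSetting S Ω)

lemma measurableSet_M_eq (k : ℕ) (i : S) : MeasurableSet {ω | X.M k ω = i} :=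
  X.measM k (measurableSet_singleton i)

lemma measurable_Pprod (n : ℕ) : Measurable (X.Pprod n) :=
  Finset.measurable_prod _ fun k _ => X.measA k

lemma measurable_Ssum (n : ℕ) : Measurable (X.Ssum n) :=
  Finset.measurable_sum _ fun k _ => (X.measurable_Pprod k).mul (X.measB k)

lemma Ssum_eq_sF (n : ℕ) (ω : Ω) : X.Ssum n ω = sF n (X.Phi n ω) := by
  rw [Ssum, sF, sN]
  refine Finset.sum_congr rfl fun k hk => ?_
  have hk' := Finset.mem_range.mp hk
  have h2 : (exd (X.Phi n ω) k).2 = X.B k ω := by rw [exd_lt _ hk']; rfl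
  have h1 : pN k (exd (X.Phi n ω)) = X.Pprod k ω := by
    rw [pN, Pprod]
    refine Finset.prod_congr rfl fun l hl => ?_
    rw [exd_lt _ (lt_trans (Finset.mem_range.mp hl) hk')]
    rfl
  rw [h1, h2]

lemma Pprod_eq_pF (n : ℕ) (ω : Ω) : X.Pprod n ω = pF n (X.Phi n ω) := by
  rw [Pprod, pF, pN]
  refine Finset.prod_congr rfl fun l hl => ?_
  rw [exd_lt _ (Finset.mem_range.mp hl)]
  rfl

lemma tau_one_def (i : S) (ω : Ω) : X.tau i 1 ω = sInf {k | 0 < k ∧ X.M k ω = i} := rfl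

lemma tau_eq_of (i : S) {ω : Ω} {n : ℕ} (hn : 0 < n) (hM : X.M n ω = i)
    (hlt : ∀ k, 0 < k → k < n → X.M k ω ≠ i) : X.tau i 1 ω = n := by
  rw [tau_one_def]
  have hmem : n ∈ {k | 0 < k ∧ X.M k ω = i} := ⟨hn, hM⟩
  refine le_antisymm (Nat.sInf_le hmem) ?_
  by_contra h
  push_neg at h
  have hmem' := Nat.sInf_mem (⟨n, hmem⟩ : {k | 0 < k ∧ X.M k ω = i}.Nonempty)
  exact hlt _ hmem'.1 h hmem'.2

lemma tau_spec (i : S) {ω : Ω} {n : ℕ} (h : X.tau i 1 ω = n) (hn : 0 < n) :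
    X.M n ω = i ∧ ∀ k, 0 < k → k < n → X.M k ω ≠ i := by
  rw [tau_one_def] at h
  have hne : {k | 0 < k ∧ X.M k ω = i}.Nonempty := by
    by_contra hne
    rw [Set.not_nonempty_iff_eq_empty] at hne
    rw [hne, Nat.sInf_empty] at h
    omega
  have hmem := Nat.sInf_mem hne
  rw [h] at hmem
  refine ⟨hmem.2, fun k hk0 hkn hM => ?_⟩
  exact Nat.notMem_of_lt_sInf (h ▸ hkn) (show k ∈ {k | 0 < k ∧ X.M k ω = i} from ⟨hk0, hM⟩)

lemma tau_zero_iff (i : S) (ω : Ω) : X.tau i 1 ω = 0 ↔ ¬ ∃ n, 0 < n ∧ X.M n ω = i := by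
  rw [tau_one_def, Nat.sInf_eq_zero]
  constructor
  · rintro (⟨h0, _⟩ | hemp)
    · omega
    · rw [Set.eq_empty_iff_forall_notMem] at hemp
      rintro ⟨n, hn1, hn2⟩
      exact hemp n ⟨hn1, hn2⟩
  · intro h
    right
    rw [Set.eq_empty_iff_forall_notMem]
    rintro n ⟨h1, h2⟩
    exact h ⟨n, h1, h2⟩

lemma measurableSet_hit (k : ℕ) (i : S) : MeasurableSet {ω | 0 < k ∧ X.M k ω = i} := by
  by_cases hk : 0 < k
  · have : {ω | 0 < k ∧ X.M k ω = i} = {ω | X.M k ω = i} := by ext ω; simp [hk]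
    rw [this]; exact X.measurableSet_M_eq k i
  · have : {ω | 0 < k ∧ X.M k ω = i} = ∅ := by ext ω; simp [hk]
    rw [this]; exact MeasurableSet.empty

lemma measurable_tau (i : S) : Measurable (X.tau i 1) := by
  apply measurable_to_countable'
  intro n
  rcases Nat.eq_zero_or_pos n with rfl | hn
  · have : X.tau i 1 ⁻¹' {0} = ⋂ k, {ω | 0 < k ∧ X.M k ω = i}ᶜ := by
      ext ω
      simp only [Set.mem_preimage, Set.mem_singleton_iff, Set.mem_iInter, Set.mem_compl_iff,
        Set.mem_setOf_eq]
      rw [X.tau_zero_iff]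
      constructor
      · intro h k hcon
        exact h ⟨k, hcon.1, hcon.2⟩
      · rintro h ⟨k, hk, hM⟩
        exact h k ⟨hk, hM⟩
    rw [this]
    exact MeasurableSet.iInter fun k => (X.measurableSet_hit k i).compl
  · have : X.tau i 1 ⁻¹' {n} = {ω | X.M n ω = i} ∩ ⋂ k ∈ Finset.range n, {ω | 0 < k ∧ X.M k ω = i}ᶜ := by
      ext ω
      simp only [Set.mem_preimage, Set.mem_singleton_iff, Set.mem_inter_iff, Set.mem_iInter,
        Finset.mem_range, Set.mem_compl_iff, Set.mem_setOf_eq]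
      constructor
      · intro h
        obtain ⟨hM, hlt⟩ := X.tau_spec i h hn
        exact ⟨hM, fun k hk => by rintro ⟨hk0, hMk⟩; exact hlt k hk0 hk hMk⟩
      · rintro ⟨hM, hlt⟩
        exact X.tau_eq_of i hn hM fun k hk0 hkn hMk => hlt k hkn ⟨hk0, hMk⟩
    rw [this]
    exact (X.measurableSet_M_eq n i).inter
      (MeasurableSet.biInter (Finset.range n).countable_toSet
        fun k _ => (X.measurableSet_hit k i).compl)

lemma Bi_def' (i : S) (ω : Ω) : X.Bi i ω = X.Ssum (X.tau i 1 ω) ω := rfl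

lemma Ai_def' (i : S) (ω : Ω) : X.Ai i ω = X.Pprod (X.tau i 1 ω) ω := rfl

lemma measurableSet_Bi_eq (i : S) : MeasurableSet {ω | X.Bi i ω = 0} := by
  have : {ω | X.Bi i ω = 0} = ⋃ n, ({ω | X.tau i 1 ω = n} ∩ {ω | X.Ssum n ω = 0}) := by
    ext ω
    simp only [Set.mem_setOf_eq, Set.mem_iUnion, Set.mem_inter_iff]
    constructor
    · intro h
      exact ⟨X.tau i 1 ω, rfl, by rw [← Bi_def']; exact h⟩
    · rintro ⟨n, h1, h2⟩
      rw [Bi_def', h1]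
      exact h2
  rw [this]
  exact MeasurableSet.iUnion fun n =>
    ((X.measurable_tau i) (measurableSet_singleton n)).inter
      ((X.measurable_Ssum n) (measurableSet_singleton 0))

/-- Concatenation of two paths. -/
def cat (ρ : ℕ → S) (m : ℕ) (δ : ℕ → S) : ℕ → S := fun k => if k < m then ρ k else δ (k - m)

lemma cat_le {ρ δ : ℕ → S} {m : ℕ} (hj : ρ m = δ 0) {k : ℕ} (hk : k ≤ m) :
    cat ρ m δ k = ρ k := by
  rcases lt_or_eq_of_le hk with h | rfl
  · simp [cat, h]
  · simp [cat, hj.symm]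

lemma cat_shift (ρ : ℕ → S) (m : ℕ) (δ : ℕ → S) (k : ℕ) : cat ρ m δ (m + k) = δ k := by
  simp only [cat, Nat.add_sub_cancel_left, if_neg (by omega : ¬ m + k < m)]

lemma pos_cat {ρ δ : ℕ → S} {m r : ℕ} (hj : ρ m = δ 0) (h1 : X.pos ρ m) (h2 : X.pos δ r) :
    X.pos (cat ρ m δ) (m + r) := by
  intro k hk
  rcases le_or_gt (k + 1) m with h | h
  · rw [cat_le hj (by omega), cat_le hj h]
    exact h1 k (by omega)
  · obtain ⟨t, rfl⟩ : ∃ t, k = m + t := ⟨k - m, by omega⟩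
    rw [cat_shift, show m + t + 1 = m + (t + 1) from rfl, cat_shift]
    exact h2 t (by omega)

lemma exists_pos_path (i j : S) : ∃ n : ℕ, ∃ γ : ℕ → S, γ 0 = i ∧ γ n = j ∧ X.pos γ n := by
  obtain ⟨n, hn⟩ := X.irreducible i j
  have hcover : {ω | X.M n ω = j} ⊆
      ⋃ v : {v : Fin (n + 1) → S // v (Fin.last n) = j},
        X.cyl (fun k => if h : k < n + 1 then (v : Fin (n + 1) → S) ⟨k, h⟩ else j) n := by
    intro ω hω
    refine Set.mem_iUnion.mpr ⟨⟨fun k => X.M k ω, hω⟩, ?_⟩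
    rw [X.mem_cyl]
    intro k hk
    simp only [dif_pos (show k < n + 1 by omega)]
  have hex : ∃ v : {v : Fin (n + 1) → S // v (Fin.last n) = j},
      0 < X.P i (X.cyl (fun k => if h : k < n + 1 then (v : Fin (n + 1) → S) ⟨k, h⟩ else j) n) := by
    by_contra h
    push_neg at h
    have hnull : X.P i (⋃ v : {v : Fin (n + 1) → S // v (Fin.last n) = j},
        X.cyl (fun k => if h : k < n + 1 then (v : Fin (n + 1) → S) ⟨k, h⟩ else j) n) = 0 :=
      measure_iUnion_null fun v => nonpos_iff_eq_zero.mp (h v)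
    exact absurd (lt_of_lt_of_le hn (le_trans (measure_mono hcover) hnull.le)) (lt_irrefl 0)
  obtain ⟨v, hv⟩ := hex
  set γ : ℕ → S := fun k => if h : k < n + 1 then (v : Fin (n + 1) → S) ⟨k, h⟩ else j with hγdef
  have hγ0 : γ 0 = i := by
    by_contra hne
    have hsub : X.cyl γ n ⊆ {ω | X.M 0 ω = i}ᶜ := by
      intro ω hω
      have h0 := (X.mem_cyl.mp hω) 0 (by omega)
      simp only [Set.mem_compl_iff, Set.mem_setOf_eq]
      intro h'
      exact hne (h0 ▸ h')
    have hcompl : X.P i {ω | X.M 0 ω = i}ᶜ = 0 := by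
      rw [measure_compl (X.measurableSet_M_eq 0 i) (measure_ne_top _ _), X.start i,
        measure_univ, tsub_self]
    exact absurd hv (by
      rw [lt_iff_not_ge]
      push_neg
      exact le_trans (measure_mono hsub) hcompl.le)
  have hγn : γ n = j := by
    have := v.2
    simp only [hγdef, dif_pos (show n < n + 1 by omega)]
    exact this
  refine ⟨n, γ, hγ0, hγn, fun k hk => ?_⟩
  by_contra hz
  push_neg at hz
  have h0 : X.P i (X.cyl γ n) = 0 := by
    rw [X.P_cyl hγ0]
    exact Finset.prod_eq_zero (Finset.mem_range.mpr hk) (nonpos_iff_eq_zero.mp hz)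
  exact absurd hv (by rw [h0]; exact lt_irrefl 0)

end MMSetting


namespace MMSetting

variable {S : Type*} [MeasurableSpace S] [MeasurableSingletonClass S] [Countable S]
variable {Ω : Type*} [MeasurableSpace Ω] (X : MMSetting S Ω)

lemma K_fst_null (hA : X.Pπ {ω | X.A 0 ω = 0} = 0) {j k : S} (hp : 0 < X.p j k) :
    X.K j k {v : ℝ × ℝ | v.1 = 0} = 0 := by
  have hmeasA : MeasurableSet {ω | X.A 0 ω = 0} := X.measA 0 (measurableSet_singleton 0)
  have hsum : X.Pπ {ω | X.A 0 ω = 0} = ∑' i, X.π i * X.P i {ω | X.A 0 ω = 0} := by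
    rw [Pπ, Measure.sum_apply _ hmeasA]
    exact tsum_congr fun i => rfl
  have hPj : X.P j {ω | X.A 0 ω = 0} = 0 := by
    have h0 := ENNReal.tsum_eq_zero.mp (hsum ▸ hA) j
    rcases mul_eq_zero.mp h0 with h | h
    · exact absurd h (ne_of_gt (X.πpos j))
    · exact h
  set γ : ℕ → S := fun t => if t = 0 then j else k with hγ
  have hγ0 : γ 0 = j := by simp [hγ]
  have hγ1 : γ 1 = k := by simp [hγ]
  have hE : MeasurableSet {x : Fin 1 → ℝ × ℝ | (x 0).1 = 0} :=
    (measurable_pi_apply 0).fst (measurableSet_singleton 0)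
  have htr := X.cyl_inter (n := 1) hγ0 hE
  have hsub : X.cyl γ 1 ∩ X.Phi 1 ⁻¹' {x | (x 0).1 = 0} ⊆ {ω | X.A 0 ω = 0} :=
    fun ω hω => hω.2
  have h0 : X.P j (X.cyl γ 1 ∩ X.Phi 1 ⁻¹' {x | (x 0).1 = 0}) = 0 :=
    nonpos_iff_eq_zero.mp (le_trans (measure_mono hsub) hPj.le)
  rw [h0] at htr
  have hc : X.P j (X.cyl γ 1) ≠ 0 := by
    refine ne_of_gt (X.cyl_pos hγ0 fun t ht => ?_)
    interval_cases t
    rw [hγ0, hγ1]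
    exact hp
  have hkap0 : X.kap γ 1 {x | (x 0).1 = 0} = 0 := by
    rcases mul_eq_zero.mp htr.symm with h | h
    · exact absurd h hc
    · exact h
  have hco := X.kap_coord (γ := γ) (n := 1) 0 (s := {v : ℝ × ℝ | v.1 = 0})
    (measurable_fst (measurableSet_singleton 0))
  have : X.kap γ 1 {x | x 0 ∈ {v : ℝ × ℝ | v.1 = 0}} = X.kap γ 1 {x | (x 0).1 = 0} := rfl
  rw [this, hkap0] at hco
  rw [← hγ1]
  exact hco.symm

lemma pF_ne_zero (hK : ∀ j k : S, 0 < X.p j k → X.K j k {v : ℝ × ℝ | v.1 = 0} = 0)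
    {γ : ℕ → S} {n : ℕ} (hpos : X.pos γ n) :
    ∀ᵐ x ∂X.kap γ n, pF n x ≠ 0 := by
  have hco : ∀ k : Fin n, ∀ᵐ x ∂X.kap γ n, (x k).1 ≠ 0 := by
    intro k
    have h0 : X.kap γ n {x | x k ∈ {v : ℝ × ℝ | v.1 = 0}} = 0 := by
      rw [X.kap_coord (γ := γ) k (s := {v : ℝ × ℝ | v.1 = 0})
        (measurable_fst (measurableSet_singleton 0))]
      exact hK _ _ (hpos k k.2)
    rw [ae_iff]
    convert h0 using 2
    simp
  have hall := ae_all_iff.mpr hco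
  filter_upwards [hall] with x hx
  rw [pF, pN]
  refine Finset.prod_ne_zero_iff.mpr fun k hk => ?_
  have hk' := Finset.mem_range.mp hk
  rw [exd_lt _ hk']
  exact hx ⟨k, hk'⟩

/-- Transfer of a `P_b`-a.s. property of the first-return cycle increment to the path measure
of a first-return path. -/
lemma FR_sF_zero {b : S} (hB : X.P b {ω | X.Bi b ω = 0} = 1) {γ : ℕ → S} {n : ℕ}
    (h0 : γ 0 = b) (hn : γ n = b) (hpos : X.pos γ n) (hn0 : 0 < n)
    (hfr : ∀ k, 0 < k → k < n → γ k ≠ b) :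
    ∀ᵐ x ∂X.kap γ n, sF n x = 0 := by
  have hBc : X.P b {ω | X.Bi b ω = 0}ᶜ = 0 := by
    rw [measure_compl (X.measurableSet_Bi_eq b) (measure_ne_top _ _), hB, measure_univ, tsub_self]
  have hsub : X.cyl γ n ∩ X.Phi n ⁻¹' {x | sF n x ≠ 0} ⊆ {ω | X.Bi b ω = 0}ᶜ := by
    rintro ω ⟨hcyl, hbad⟩
    have hM := X.mem_cyl.mp hcyl
    have hτ : X.tau b 1 ω = n := X.tau_eq_of b hn0 (by rw [hM n le_rfl]; exact hn)
      (fun k hk0 hkn hMk => hfr k hk0 hkn (by rw [← hM k (le_of_lt hkn)]; exact hMk))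
    simp only [Set.mem_compl_iff, Set.mem_setOf_eq]
    have heq : X.Bi b ω = sF n (X.Phi n ω) := by rw [Bi_def', hτ, X.Ssum_eq_sF]
    intro hBi
    exact hbad (show sF n (X.Phi n ω) = 0 by rw [← heq]; exact hBi)
  have hmeasE : MeasurableSet {x : Fin n → ℝ × ℝ | sF n x ≠ 0} :=
    ((measurable_sF n) (measurableSet_singleton 0)).compl
  have h0' : X.P b (X.cyl γ n ∩ X.Phi n ⁻¹' {x | sF n x ≠ 0}) = 0 :=
    nonpos_iff_eq_zero.mp (le_trans (measure_mono hsub) hBc.le)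
  rw [X.cyl_inter h0 hmeasE] at h0'
  have hc : X.P b (X.cyl γ n) ≠ 0 := ne_of_gt (X.cyl_pos h0 hpos)
  have hkap0 : X.kap γ n {x | sF n x ≠ 0} = 0 := by
    rcases mul_eq_zero.mp h0' with h | h
    · exact absurd h hc
    · exact h
  rw [ae_iff]
  convert hkap0 using 2

end MMSetting


namespace MMSetting

variable {S : Type*} [MeasurableSpace S] [MeasurableSingletonClass S] [Countable S]
variable {Ω : Type*} [MeasurableSpace Ω] (X : MMSetting S Ω)

lemma measurePreserving_kap (γ : ℕ → S) (m r : ℕ) :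
    MeasurePreserving (appT m r)
      ((X.kap γ m).prod (X.kap (fun k => γ (m + k)) r)) (X.kap γ (m + r)) := by
  haveI : ∀ k : ℕ, IsProbabilityMeasure (X.K (γ k) (γ (k + 1))) := fun k => X.Kprob _ _
  exact measurePreserving_appT (fun k => X.K (γ k) (γ (k + 1))) m r

/-- All cycle increments at `b` vanish a.s. along positive cycles, when the first-return
increment vanishes a.s. -/
lemma cycle_vanish {b : S} (hB : X.P b {ω | X.Bi b ω = 0} = 1) :
    ∀ n : ℕ, ∀ γ : ℕ → S, γ 0 = b → γ n = b → X.pos γ n →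
      ∀ᵐ x ∂X.kap γ n, sF n x = 0 := by
  intro n
  induction n using Nat.strong_induction_on with
  | _ n IH =>
    intro γ h0 hn hpos
    rcases Nat.eq_zero_or_pos n with rfl | hn0
    · filter_upwards with x
      exact sF_zero x
    · have hTne : {k | 0 < k ∧ γ k = b}.Nonempty := ⟨n, hn0, hn⟩
      set m := sInf {k | 0 < k ∧ γ k = b} with hm
      have hmem := Nat.sInf_mem hTne
      have hm0 : 0 < m := hmem.1
      have hγm : γ m = b := hmem.2
      have hmn : m ≤ n := Nat.sInf_le ⟨hn0, hn⟩
      obtain ⟨r, rfl⟩ : ∃ r, n = m + r := ⟨n - m, by omega⟩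
      have h1 : ∀ᵐ x ∂X.kap γ m, sF m x = 0 :=
        X.FR_sF_zero hB h0 hγm (fun k hk => hpos k (by omega)) hm0
          (fun k hk0 hkm hγk =>
            Nat.notMem_of_lt_sInf (hm ▸ hkm) (show k ∈ {k | 0 < k ∧ γ k = b} from ⟨hk0, hγk⟩))
      have h2 : ∀ᵐ y ∂X.kap (fun k => γ (m + k)) r, sF r y = 0 := by
        refine IH r (by omega) _ (by simpa using hγm) hn ?_
        intro k hk
        exact hpos (m + k) (by omega)
      have hmp := X.measurePreserving_kap γ m r
      have hprodae : ∀ᵐ q ∂((X.kap γ m).prod (X.kap (fun k => γ (m + k)) r)),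
          sF (m + r) (appT m r q) = 0 := by
        filter_upwards [ae_prod_mk h1 h2] with q hq
        rw [sF_appT, hq.1, hq.2]
        ring
      rw [← hmp.map_eq]
      exact (MeasureTheory.ae_map_iff hmp.measurable.aemeasurable
        ((measurable_sF (m + r)) (measurableSet_singleton 0))).mpr hprodae

end MMSetting


namespace MMSetting

variable {S : Type*} [MeasurableSpace S] [MeasurableSingletonClass S] [Countable S]
variable {Ω : Type*} [MeasurableSpace Ω] (X : MMSetting S Ω)

/-- The increment along any positive path from `j` to `b` is a.e. constant, with a constant
independent of the path. -/
lemma exists_const {b : S}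
    (hcv : ∀ n : ℕ, ∀ γ : ℕ → S, γ 0 = b → γ n = b → X.pos γ n → ∀ᵐ x ∂X.kap γ n, sF n x = 0)
    (hK : ∀ j k : S, 0 < X.p j k → X.K j k {v : ℝ × ℝ | v.1 = 0} = 0) (j : S) :
    ∃ r : ℝ, ∀ n : ℕ, ∀ γ : ℕ → S, γ 0 = j → γ n = b → X.pos γ n →
      ∀ᵐ x ∂X.kap γ n, sF n x = r := by
  obtain ⟨m, ρ, hρ0, hρm, hρpos⟩ := X.exists_pos_path b j
  set F : (Fin m → ℝ × ℝ) → ℝ := fun x => -sF m x / pF m x with hF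
  have key : ∀ n : ℕ, ∀ γ : ℕ → S, γ 0 = j → γ n = b → X.pos γ n →
      ∃ r : ℝ, (∀ᵐ x ∂X.kap ρ m, F x = r) ∧ (∀ᵐ y ∂X.kap γ n, sF n y = r) := by
    intro n γ hγ0 hγn hγpos
    have hj : ρ m = γ 0 := by rw [hρm, hγ0]
    have hcyc := hcv (m + n) (cat ρ m γ) (by rw [cat_le hj (Nat.zero_le m)]; exact hρ0)
      (by rw [cat_shift]; exact hγn) (X.pos_cat hj hρpos hγpos)
    have hmp := X.measurePreserving_kap (cat ρ m γ) m n
    have hkapρ : X.kap (cat ρ m γ) m = X.kap ρ m := X.kap_congr fun k hk => cat_le hj hk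
    have hshift : (fun k => cat ρ m γ (m + k)) = γ := funext fun k => cat_shift ρ m γ k
    rw [hkapρ, hshift] at hmp
    have hae : ∀ᵐ q ∂(X.kap ρ m).prod (X.kap γ n), sF (m + n) (appT m n q) = 0 :=
      hmp.quasiMeasurePreserving.ae hcyc
    have hne : ∀ᵐ q ∂(X.kap ρ m).prod (X.kap γ n), pF m q.1 ≠ 0 :=
      Measure.quasiMeasurePreserving_fst.ae (X.pF_ne_zero hK hρpos)
    have heq : ∀ᵐ q ∂(X.kap ρ m).prod (X.kap γ n), sF n q.2 = F q.1 := by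
      filter_upwards [hae, hne] with q hq hq'
      rw [sF_appT] at hq
      rw [hF]
      field_simp
      linear_combination hq
    exact ae_const_of_prod_eq heq
  obtain ⟨n0, δ, hδ0, hδn, hδpos⟩ := X.exists_pos_path j b
  obtain ⟨r, hrF, hrδ⟩ := key n0 δ hδ0 hδn hδpos
  refine ⟨r, fun n γ hγ0 hγn hγpos => ?_⟩
  obtain ⟨r', hr'F, hr'γ⟩ := key n γ hγ0 hγn hγpos
  have hrr : r = r' := by
    obtain ⟨x, hx1, hx2⟩ := (hrF.and hr'F).exists
    rw [← hx1, ← hx2]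
  rw [← hrr] at hr'γ
  exact hr'γ

/-- The one-step degeneracy relation along positive edges. -/
lemma edge_rel {b : S} {c : S → ℝ}
    (hc : ∀ j : S, ∀ n : ℕ, ∀ γ : ℕ → S, γ 0 = j → γ n = b → X.pos γ n →
      ∀ᵐ x ∂X.kap γ n, sF n x = c j)
    {j k : S} (hp : 0 < X.p j k) :
    ∀ᵐ v ∂X.K j k, v.1 * c k + v.2 = c j := by
  obtain ⟨n, δ, hδ0, hδn, hδpos⟩ := X.exists_pos_path k b
  set ρ : ℕ → S := fun t => if t = 0 then j else k with hρ
  have hρ0 : ρ 0 = j := by simp [hρ]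
  have hρ1 : ρ 1 = k := by simp [hρ]
  have hj : ρ 1 = δ 0 := by rw [hρ1, hδ0]
  have hρpos : X.pos ρ 1 := by
    intro t ht
    interval_cases t
    rw [hρ0, hρ1]
    exact hp
  set e : ℕ → S := cat ρ 1 δ with he
  have he0 : e 0 = j := by rw [he, cat_le hj (Nat.zero_le 1)]; exact hρ0
  have hen : e (1 + n) = b := by rw [he, cat_shift]; exact hδn
  have hepos : X.pos e (1 + n) := X.pos_cat hj hρpos hδpos
  have hcj := hc j (1 + n) e he0 hen hepos
  have hmp := X.measurePreserving_kap e 1 n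
  have hkapρ : X.kap e 1 = X.kap ρ 1 := X.kap_congr fun t ht => by rw [he]; exact cat_le hj ht
  have hshift : (fun t => e (1 + t)) = δ := funext fun t => by rw [he]; exact cat_shift ρ 1 δ t
  rw [hkapρ, hshift] at hmp
  have hae : ∀ᵐ q ∂(X.kap ρ 1).prod (X.kap δ n), sF (1 + n) (appT 1 n q) = c j :=
    hmp.quasiMeasurePreserving.ae hcj
  have hck : ∀ᵐ q ∂(X.kap ρ 1).prod (X.kap δ n), sF n q.2 = c k :=
    Measure.quasiMeasurePreserving_snd.ae (hc k n δ hδ0 hδn hδpos)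
  have hcomb : ∀ᵐ q ∂(X.kap ρ 1).prod (X.kap δ n),
      (q.1 0).1 * c k + (q.1 0).2 = c j := by
    filter_upwards [hae, hck] with q hq1 hq2
    rw [sF_appT, sF_one, pF_one, hq2] at hq1
    linear_combination hq1
  have hfst : ∀ᵐ x ∂X.kap ρ 1, (x 0).1 * c k + (x 0).2 = c j := ae_fst_of_ae_prod hcomb
  have hmeasv : MeasurableSet {v : ℝ × ℝ | ¬ (v.1 * c k + v.2 = c j)} :=
    (((measurable_fst.mul measurable_const).add measurable_snd)
      (measurableSet_singleton (c j))).compl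
  rw [ae_iff] at hfst ⊢
  have hco := X.kap_coord (γ := ρ) (n := 1) 0
    (s := {v : ℝ × ℝ | ¬ (v.1 * c k + v.2 = c j)}) hmeasv
  have hset : {x : Fin 1 → ℝ × ℝ | ¬ ((x 0).1 * c k + (x 0).2 = c j)}
      = {x : Fin 1 → ℝ × ℝ | x 0 ∈ {v : ℝ × ℝ | ¬ (v.1 * c k + v.2 = c j)}} := rfl
  rw [hset, hco] at hfst
  rw [← hρ0, ← hρ1]
  exact hfst

/-- Iterating the edge relation along a positive path. -/
lemma path_rel {c : S → ℝ}
    (hedge : ∀ j k : S, 0 < X.p j k → ∀ᵐ v ∂X.K j k, v.1 * c k + v.2 = c j) :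
    ∀ n : ℕ, ∀ γ : ℕ → S, X.pos γ n →
      ∀ᵐ x ∂X.kap γ n, sF n x + pF n x * c (γ n) = c (γ 0) := by
  intro n
  induction n with
  | zero =>
    intro γ _
    filter_upwards with x
    rw [sF_zero, pF_zero]
    ring
  | succ n IH =>
    intro γ hpos
    have h1 : ∀ᵐ x ∂X.kap γ n, sF n x + pF n x * c (γ n) = c (γ 0) :=
      IH γ (fun k hk => hpos k (by omega))
    have h2k : ∀ᵐ v ∂X.K (γ n) (γ (n + 1)), v.1 * c (γ (n + 1)) + v.2 = c (γ n) :=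
      hedge _ _ (hpos n (by omega))
    have hmeasv : MeasurableSet {v : ℝ × ℝ | ¬ (v.1 * c (γ (n + 1)) + v.2 = c (γ n))} :=
      (((measurable_fst.mul measurable_const).add measurable_snd)
        (measurableSet_singleton (c (γ n)))).compl
    have h2 : ∀ᵐ y ∂X.kap (fun t => γ (n + t)) 1,
        (y 0).1 * c (γ (n + 1)) + (y 0).2 = c (γ n) := by
      rw [ae_iff] at h2k ⊢
      have hco := X.kap_coord (γ := fun t => γ (n + t)) (n := 1) 0
        (s := {v : ℝ × ℝ | ¬ (v.1 * c (γ (n + 1)) + v.2 = c (γ n))}) hmeasv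
      have hset : {y : Fin 1 → ℝ × ℝ | ¬ ((y 0).1 * c (γ (n + 1)) + (y 0).2 = c (γ n))}
          = {y : Fin 1 → ℝ × ℝ | y 0 ∈ {v : ℝ × ℝ | ¬ (v.1 * c (γ (n + 1)) + v.2 = c (γ n))}} :=
        rfl
      rw [hset, hco]
      exact h2k
    have hmp := X.measurePreserving_kap γ n 1
    have hprodae : ∀ᵐ q ∂(X.kap γ n).prod (X.kap (fun t => γ (n + t)) 1),
        sF (n + 1) (appT n 1 q) + pF (n + 1) (appT n 1 q) * c (γ (n + 1)) = c (γ 0) := by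
      filter_upwards [ae_prod_mk h1 h2] with q hq
      obtain ⟨hq1, hq2⟩ := hq
      rw [sF_appT, pF_appT, sF_one, pF_one]
      linear_combination hq1 + pF n q.1 * hq2
    rw [← hmp.map_eq]
    exact (MeasureTheory.ae_map_iff hmp.measurable.aemeasurable
      (((measurable_sF (n + 1)).add ((measurable_pF (n + 1)).mul measurable_const))
        (measurableSet_singleton (c (γ 0))))).mpr hprodae

end MMSetting


namespace MMSetting

variable {S : Type*} [MeasurableSpace S] [MeasurableSingletonClass S] [Countable S]
variable {Ω : Type*} [MeasurableSpace Ω] (X : MMSetting S Ω)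

lemma Pπ_apply {s : Set Ω} (hs : MeasurableSet s) : X.Pπ s = ∑' i, X.π i * X.P i s := by
  rw [Pπ, Measure.sum_apply _ hs]
  exact tsum_congr fun i => rfl

instance : IsProbabilityMeasure X.Pπ := by
  constructor
  rw [X.Pπ_apply MeasurableSet.univ]
  have : ∀ i : S, X.π i * X.P i Set.univ = X.π i := fun i => by
    rw [measure_univ, mul_one]
  rw [tsum_congr this]
  exact X.πsum

lemma pos_of_cyl_ne {i : S} {γ : ℕ → S} {n : ℕ} (h : X.P i (X.cyl γ n) ≠ 0) :
    γ 0 = i ∧ X.pos γ n := by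
  have hγ0 : γ 0 = i := by
    by_contra hne
    have hsub : X.cyl γ n ⊆ {ω | X.M 0 ω = i}ᶜ := by
      intro ω hω
      have h0 := (X.mem_cyl.mp hω) 0 (by omega)
      simp only [Set.mem_compl_iff, Set.mem_setOf_eq]
      intro h'
      exact hne (h0 ▸ h')
    have hcompl : X.P i {ω | X.M 0 ω = i}ᶜ = 0 := by
      rw [measure_compl (X.measurableSet_M_eq 0 i) (measure_ne_top _ _), X.start i,
        measure_univ, tsub_self]
    exact h (nonpos_iff_eq_zero.mp (le_trans (measure_mono hsub) hcompl.le))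
  refine ⟨hγ0, fun k hk => ?_⟩
  by_contra hz
  push_neg at hz
  exact h (by
    rw [X.P_cyl hγ0]
    exact Finset.prod_eq_zero (Finset.mem_range.mpr hk) (nonpos_iff_eq_zero.mp hz))

lemma P_null_of_edges {N : Set Ω}
    (h : ∀ i k : S, 0 < X.p i k →
      X.P i (N ∩ X.cyl (fun t => if t = 0 then i else k) 1) = 0) (i : S) :
    X.P i N = 0 := by
  have hM0 : X.P i {ω | X.M 0 ω = i}ᶜ = 0 := by
    rw [measure_compl (X.measurableSet_M_eq 0 i) (measure_ne_top _ _), X.start i,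
      measure_univ, tsub_self]
  have hsub : N ⊆ (⋃ k : S, N ∩ X.cyl (fun t => if t = 0 then i else k) 1)
      ∪ {ω | X.M 0 ω = i}ᶜ := by
    intro ω hω
    by_cases h0 : X.M 0 ω = i
    · left
      refine Set.mem_iUnion.mpr ⟨X.M 1 ω, hω, ?_⟩
      rw [X.mem_cyl]
      intro t ht
      interval_cases t
      · simpa using h0
      · simp
    · right
      exact h0
  refine nonpos_iff_eq_zero.mp (le_trans (measure_mono hsub) (le_trans (measure_union_le _ _) ?_))
  rw [hM0, add_zero]
  refine le_of_eq (measure_iUnion_null fun k => ?_)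
  by_cases hp : 0 < X.p i k
  · exact h i k hp
  · have hcyl0 : X.P i (X.cyl (fun t => if t = 0 then i else k) 1) = 0 := by
      rw [X.P_cyl (by simp)]
      rw [Finset.prod_range_one]
      simpa using nonpos_iff_eq_zero.mp (le_of_not_gt hp)
    exact nonpos_iff_eq_zero.mp (le_trans (measure_mono Set.inter_subset_right) hcyl0.le)

/-- Part (a): a vanishing first-return cycle increment at some state forces degeneracy. -/
lemma degenD_of (hA : X.Pπ {ω | X.A 0 ω = 0} = 0) {b : S}
    (hB : X.P b {ω | X.Bi b ω = 0} = 1) : ∃ c : S → ℝ, X.DegenD c := by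
  have hK : ∀ j k : S, 0 < X.p j k → X.K j k {v : ℝ × ℝ | v.1 = 0} = 0 :=
    fun j k hp => X.K_fst_null hA hp
  have hcv := X.cycle_vanish hB
  choose c hc using X.exists_const hcv hK
  refine ⟨c, ?_⟩
  show ∀ᵐ ω ∂X.Pπ, X.A 0 ω * c (X.M 1 ω) + X.B 0 ω = c (X.M 0 ω)
  rw [ae_iff]
  have hNmeas : MeasurableSet {ω | ¬ (X.A 0 ω * c (X.M 1 ω) + X.B 0 ω = c (X.M 0 ω))} := by
    refine (measurableSet_eq_fun ?_ ?_).compl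
    · exact ((X.measA 0).mul ((measurable_of_countable c).comp (X.measM 1))).add (X.measB 0)
    · exact (measurable_of_countable c).comp (X.measM 0)
  rw [X.Pπ_apply hNmeas]
  refine ENNReal.tsum_eq_zero.mpr fun i => ?_
  rw [X.P_null_of_edges ?_ i, mul_zero]
  intro i k hp
  have hedge := X.edge_rel (fun j => hc j) hp
  have hmeasv : MeasurableSet {v : ℝ × ℝ | ¬ (v.1 * c k + v.2 = c i)} :=
    (((measurable_fst.mul measurable_const).add measurable_snd)
      (measurableSet_singleton (c i))).compl
  set e : ℕ → S := fun t => if t = 0 then i else k with he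
  have he0 : e 0 = i := by simp [he]
  have he1 : e 1 = k := by simp [he]
  have hset : {ω | ¬ (X.A 0 ω * c (X.M 1 ω) + X.B 0 ω = c (X.M 0 ω))} ∩ X.cyl e 1
      = X.cyl e 1 ∩ X.Phi 1 ⁻¹' {x | x 0 ∈ {v : ℝ × ℝ | ¬ (v.1 * c k + v.2 = c i)}} := by
    ext ω
    simp only [Set.mem_inter_iff, Set.mem_setOf_eq, Set.mem_preimage]
    constructor
    · rintro ⟨hbad, hcyl⟩
      have hM := X.mem_cyl.mp hcyl
      have hM0 : X.M 0 ω = i := by rw [hM 0 (by omega)]; exact he0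
      have hM1 : X.M 1 ω = k := by rw [hM 1 le_rfl]; exact he1
      refine ⟨hcyl, ?_⟩
      show ¬ ((X.A 0 ω) * c k + X.B 0 ω = c i)
      rw [← hM0, ← hM1]
      exact hbad
    · rintro ⟨hcyl, hbad⟩
      have hM := X.mem_cyl.mp hcyl
      have hM0 : X.M 0 ω = i := by rw [hM 0 (by omega)]; exact he0
      have hM1 : X.M 1 ω = k := by rw [hM 1 le_rfl]; exact he1
      refine ⟨?_, hcyl⟩
      rw [hM0, hM1]
      exact hbad
  have htr := X.cyl_inter (n := 1) he0
    (E := {x : Fin 1 → ℝ × ℝ | x 0 ∈ {v : ℝ × ℝ | ¬ (v.1 * c k + v.2 = c i)}})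
    ((measurable_pi_apply 0) hmeasv)
  rw [hset, htr]
  have hkapnull : X.kap e 1 {x | x 0 ∈ {v : ℝ × ℝ | ¬ (v.1 * c k + v.2 = c i)}} = 0 := by
    rw [X.kap_coord (γ := e) (n := 1) 0
      (s := {v : ℝ × ℝ | ¬ (v.1 * c k + v.2 = c i)}) hmeasv]
    rw [ae_iff] at hedge
    simp only [show ((0 : Fin 1) : ℕ) = 0 from rfl, he0, he1]
    exact hedge
  rw [hkapnull, mul_zero]

end MMSetting


namespace MMSetting

variable {S : Type*} [MeasurableSpace S] [MeasurableSingletonClass S] [Countable S]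
variable {Ω : Type*} [MeasurableSpace Ω] (X : MMSetting S Ω)

/-- Part (b). -/
lemma part_b [Nonempty S] (hA : X.Pπ {ω | X.A 0 ω = 0} = 0)
    (hall : ∀ i : S, X.P i {ω | X.Bi i ω = 0} = 1) :
    X.Pπ {ω | X.B 0 ω = 0} = 1 ∨ ∀ i : S, X.P i {ω | X.Ai i ω = 1} = 1 := by
  have hK : ∀ j k : S, 0 < X.p j k → X.K j k {v : ℝ × ℝ | v.1 = 0} = 0 :=
    fun j k hp => X.K_fst_null hA hp
  obtain ⟨b⟩ : Nonempty S := inferInstance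
  choose c hc using X.exists_const (X.cycle_vanish (hall b)) hK
  by_cases hc0 : ∀ j, c j = 0
  · left
    have hedge0 : ∀ j k : S, 0 < X.p j k → ∀ᵐ v ∂X.K j k, v.2 = 0 := by
      intro j k hp
      filter_upwards [X.edge_rel (fun j => hc j) hp] with v hv
      rw [hc0 j, hc0 k] at hv
      linarith
    have hNmeas : MeasurableSet {ω | ¬ (X.B 0 ω = 0)} :=
      ((X.measB 0) (measurableSet_singleton 0)).compl
    have hN0 : X.Pπ {ω | ¬ (X.B 0 ω = 0)} = 0 := by
      rw [X.Pπ_apply hNmeas]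
      refine ENNReal.tsum_eq_zero.mpr fun i => ?_
      rw [X.P_null_of_edges ?_ i, mul_zero]
      intro i k hp
      have hmeasv : MeasurableSet {v : ℝ × ℝ | ¬ (v.2 = 0)} :=
        (measurable_snd (measurableSet_singleton 0)).compl
      set e : ℕ → S := fun t => if t = 0 then i else k with he
      have he0 : e 0 = i := by simp [he]
      have he1 : e 1 = k := by simp [he]
      have hset : {ω | ¬ (X.B 0 ω = 0)} ∩ X.cyl e 1
          = X.cyl e 1 ∩ X.Phi 1 ⁻¹' {x | x 0 ∈ {v : ℝ × ℝ | ¬ (v.2 = 0)}} := by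
        ext ω
        simp only [Set.mem_inter_iff, Set.mem_setOf_eq, Set.mem_preimage]
        exact ⟨fun h => ⟨h.2, h.1⟩, fun h => ⟨h.2, h.1⟩⟩
      have htr := X.cyl_inter (n := 1) he0
        (E := {x : Fin 1 → ℝ × ℝ | x 0 ∈ {v : ℝ × ℝ | ¬ (v.2 = 0)}})
        ((measurable_pi_apply 0) hmeasv)
      rw [hset, htr]
      have hkapnull : X.kap e 1 {x | x 0 ∈ {v : ℝ × ℝ | ¬ (v.2 = 0)}} = 0 := by
        rw [X.kap_coord (γ := e) (n := 1) 0 (s := {v : ℝ × ℝ | ¬ (v.2 = 0)}) hmeasv]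
        have hedge := hedge0 i k hp
        rw [ae_iff] at hedge
        simp only [show ((0 : Fin 1) : ℕ) = 0 from rfl, he0, he1]
        exact hedge
      rw [hkapnull, mul_zero]
    exact (prob_compl_eq_zero_iff ((X.measB 0) (measurableSet_singleton 0))).mp hN0
  · right
    push_neg at hc0
    obtain ⟨l, hl⟩ := hc0
    choose c' hc' using X.exists_const (X.cycle_vanish (hall l)) hK
    have hc'l : c' l = 0 := by
      have h := hc' l 0 (fun _ => l) rfl rfl (fun k hk => absurd hk (by omega))
      obtain ⟨x, hx⟩ := h.exists
      rw [sF_zero] at hx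
      exact hx.symm
    have hrel := X.path_rel (c := c) (fun j k hp => X.edge_rel (fun j => hc j) hp)
    have hrel' := X.path_rel (c := c') (fun j k hp => X.edge_rel (fun j => hc' j) hp)
    have hpath : ∀ j : S, ∀ n : ℕ, ∀ γ : ℕ → S, γ 0 = j → γ n = l → X.pos γ n →
        ∀ᵐ x ∂X.kap γ n, pF n x = (c j - c' j) / c l := by
      intro j n γ h0 hn hpos
      filter_upwards [hrel n γ hpos, hrel' n γ hpos] with x hx1 hx2
      rw [h0, hn] at hx1 hx2
      rw [hc'l] at hx2
      field_simp
      linear_combination hx1 - hx2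
    intro i
    obtain ⟨nρ, ρ, hρ0, hρl, hρpos⟩ := X.exists_pos_path i l
    have hqi : (c i - c' i) / c l ≠ 0 := by
      obtain ⟨x, hx1, hx2⟩ :=
        ((hpath i nρ ρ hρ0 hρl hρpos).and (X.pF_ne_zero hK hρpos)).exists
      rw [← hx1]
      exact hx2
    have hcyc1 : ∀ m : ℕ, ∀ γ : ℕ → S, γ 0 = i → γ m = i → X.pos γ m →
        ∀ᵐ x ∂X.kap γ m, pF m x = 1 := by
      intro m γ h0 hm hpos
      have hj : γ m = ρ 0 := by rw [hm, hρ0]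
      have hpq := hpath i (m + nρ) (cat γ m ρ)
        (by rw [cat_le hj (Nat.zero_le m)]; exact h0)
        (by rw [cat_shift]; exact hρl) (X.pos_cat hj hpos hρpos)
      have hmp := X.measurePreserving_kap (cat γ m ρ) m nρ
      rw [X.kap_congr (fun k hk => cat_le hj hk), funext (cat_shift γ m ρ)] at hmp
      have hae := hmp.quasiMeasurePreserving.ae hpq
      have hρq : ∀ᵐ q ∂(X.kap γ m).prod (X.kap ρ nρ), pF nρ q.2 = (c i - c' i) / c l :=
        Measure.quasiMeasurePreserving_snd.ae (hpath i nρ ρ hρ0 hρl hρpos)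
      have hone : ∀ᵐ q ∂(X.kap γ m).prod (X.kap ρ nρ), pF m q.1 = 1 := by
        filter_upwards [hae, hρq] with q h1 h2
        rw [pF_appT, h2] at h1
        exact mul_right_cancel₀ hqi (by rw [h1, one_mul])
      exact ae_fst_of_ae_prod hone
    -- conclude
    have hτ0 : X.P i {ω | X.tau i 1 ω = 0} = 0 := by
      have hmeasr : MeasurableSet {ω | ∃ n, 0 < n ∧ X.M n ω = i} := by
        have hs : {ω | ∃ n, 0 < n ∧ X.M n ω = i} = ⋃ n, {ω | 0 < n ∧ X.M n ω = i} := by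
          ext ω; simp
        rw [hs]
        exact MeasurableSet.iUnion fun n => X.measurableSet_hit n i
      have hcompl : X.P i {ω | ∃ n, 0 < n ∧ X.M n ω = i}ᶜ = 0 := by
        rw [measure_compl hmeasr (measure_ne_top _ _), X.recurrent i, measure_univ, tsub_self]
      refine nonpos_iff_eq_zero.mp (le_trans (measure_mono ?_) hcompl.le)
      intro ω hω
      exact (X.tau_zero_iff i ω).mp hω
    have hbadnull : X.P i {ω | X.Ai i ω ≠ 1} = 0 := by
      have hcov : {ω | X.Ai i ω ≠ 1} ⊆ {ω | X.tau i 1 ω = 0} ∪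
          ⋃ (n : ℕ) (v : Fin (n + 1) → S),
            (X.cyl (fun t => if h : t < n + 1 then v ⟨t, h⟩ else i) n
              ∩ {ω | X.tau i 1 ω = n} ∩ {ω | X.Ai i ω ≠ 1}) := by
        intro ω hω
        rcases Nat.eq_zero_or_pos (X.tau i 1 ω) with h0 | h0
        · left; exact h0
        · right
          refine Set.mem_iUnion.mpr ⟨X.tau i 1 ω, Set.mem_iUnion.mpr
            ⟨fun t => X.M t ω, ⟨⟨?_, rfl⟩, hω⟩⟩⟩
          rw [X.mem_cyl]
          intro t ht
          simp only [dif_pos (show t < X.tau i 1 ω + 1 by omega)]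
      refine nonpos_iff_eq_zero.mp (le_trans (measure_mono hcov)
        (le_trans (measure_union_le _ _) ?_))
      rw [hτ0, zero_add]
      refine le_of_eq (measure_iUnion_null fun n => measure_iUnion_null fun v => ?_)
      set γ : ℕ → S := fun t => if h : t < n + 1 then v ⟨t, h⟩ else i with hγ
      by_cases hcyl0 : X.P i (X.cyl γ n) = 0
      · exact nonpos_iff_eq_zero.mp
          (le_trans (measure_mono (fun ω hω => hω.1.1)) hcyl0.le)
      obtain ⟨hγ0, hγpos⟩ := X.pos_of_cyl_ne hcyl0
      rcases Nat.eq_zero_or_pos n with rfl | hn0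
      · exact nonpos_iff_eq_zero.mp
          (le_trans (measure_mono (fun ω hω => hω.1.2)) hτ0.le)
      by_cases hfr : γ n = i ∧ ∀ k, 0 < k → k < n → γ k ≠ i
      · have h1 := hcyc1 n γ hγ0 hfr.1 hγpos
        rw [ae_iff] at h1
        have hsub2 : X.cyl γ n ∩ {ω | X.tau i 1 ω = n} ∩ {ω | X.Ai i ω ≠ 1}
            ⊆ X.cyl γ n ∩ X.Phi n ⁻¹' {x | ¬ (pF n x = 1)} := by
          rintro ω ⟨⟨hcyl, hτ⟩, hbad⟩
          refine ⟨hcyl, ?_⟩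
          show ¬ (pF n (X.Phi n ω) = 1)
          rw [← X.Pprod_eq_pF]
          rw [Set.mem_setOf_eq, Ai_def', hτ] at hbad
          exact hbad
        have htr := X.cyl_inter (n := n) hγ0
          (E := {x : Fin n → ℝ × ℝ | ¬ (pF n x = 1)})
          (((measurable_pF n) (measurableSet_singleton 1)).compl)
        refine nonpos_iff_eq_zero.mp (le_trans (measure_mono hsub2) ?_)
        rw [htr, h1, mul_zero]
      · have hempty : X.cyl γ n ∩ {ω | X.tau i 1 ω = n} = ∅ := by
          rw [Set.eq_empty_iff_forall_notMem]
          rintro ω ⟨hcyl, hτ⟩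
          have hM := X.mem_cyl.mp hcyl
          obtain ⟨hMn, hlt⟩ := X.tau_spec i hτ hn0
          apply hfr
          constructor
          · rw [← hM n le_rfl]; exact hMn
          · intro k hk0 hkn hγk
            exact hlt k hk0 hkn (by rw [hM k (le_of_lt hkn)]; exact hγk)
        refine nonpos_iff_eq_zero.mp
          (le_trans (measure_mono (fun ω hω => ?_)) (le_of_eq measure_empty))
        rw [← hempty]
        exact hω.1
    have hsub3 : (Set.univ : Set Ω) ⊆ {ω | X.Ai i ω = 1} ∪ {ω | X.Ai i ω ≠ 1} := by
      intro ω _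
      by_cases h : X.Ai i ω = 1
      · left; exact h
      · right; exact h
    have hge : (1 : ℝ≥0∞) ≤ X.P i {ω | X.Ai i ω = 1} := by
      have hle := le_trans (measure_mono (μ := X.P i) hsub3)
        (measure_union_le {ω | X.Ai i ω = 1} {ω | X.Ai i ω ≠ 1})
      rw [measure_univ, hbadnull, add_zero] at hle
      exact hle
    exact le_antisymm prob_le_one hge

end MMSetting

/-- **Lemma 4.7**. In the Markov-modulated setting with `|S| > 1`, suppose
`P_π(A_1 = 0) = 0`. Then: (a) if `P_i(B_1^i = 0) = 1` for some `i ∈ S`, the degeneracy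
condition (D) holds; (b) if `P_i(B_1^i = 0) = 1` for all `i ∈ S`, then `P_π(B_1 = 0) = 1`
or `P_i(A_1^i = 1) = 1` for all `i ∈ S`. -/
theorem vanishing_cycle_increments
    {S : Type*} [MeasurableSpace S] [MeasurableSingletonClass S] [Countable S] [Nontrivial S]
    {Ω : Type*} [MeasurableSpace Ω] (X : MMSetting S Ω)
    (hA : X.Pπ {ω | X.A 0 ω = 0} = 0) :
    ((∃ i : S, X.P i {ω | X.Bi i ω = 0} = 1) → ∃ c : S → ℝ, X.DegenD c) ∧
      ((∀ i : S, X.P i {ω | X.Bi i ω = 0} = 1) →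
        X.Pπ {ω | X.B 0 ω = 0} = 1 ∨ ∀ i : S, X.P i {ω | X.Ai i ω = 1} = 1) := by
  constructor
  · rintro ⟨b, hB⟩
    exact X.degenD_of hA hB
  · intro hall
    exact X.part_b hA hall

end Perpetuities
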